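/- (Team setup, Theorem 1.) Suppose π0, π1 > 0, (C10 − C00)·(C01 − C11) > 0, ζ = sgn(C01 − C11), and τ = π0·(C10 − C00)/(π1·(C01 − C11)) (so 0 < τ < ∞). Then for every d > 0 the derivative of r at d equals −(1/√(2π))·exp(−(ln τ)²/(2d²))·exp(−d²/8)·√(π0·π1·(C10 − C00)·(C01 − C11)), which is strictly negative; consequently r is strictly decreasing on (0, ∞), so for every d_max > 0 the unique minimizer of r over (0, d_max] is d_max. -/

import Mathlib

/-- The Gaussian Q-function `Q(x) = (1/√(2π)) ∫_x^∞ exp(−t²/2) dt`. -/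
noncomputable def gaussQ (x : ℝ) : ℝ :=
  (Real.sqrt (2 * Real.pi))⁻¹ * ∫ t in Set.Ioi x, Real.exp (-(t ^ 2 / 2))

lemma gauss_integrable : MeasureTheory.Integrable (fun t : ℝ => Real.exp (-(t ^ 2 / 2))) := by
  have := integrable_exp_neg_mul_sq (by norm_num : (0:ℝ) < 1/2)
  convert this using 2 with t
  ring_nf

lemma hasDerivAt_gaussQ (x : ℝ) :
    HasDerivAt gaussQ (-((Real.sqrt (2 * Real.pi))⁻¹ * Real.exp (-(x ^ 2 / 2)))) x := by
  have hf : Continuous fun t : ℝ => Real.exp (-(t ^ 2 / 2)) := by continuity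
  have hint := gauss_integrable
  have key : ∀ y : ℝ, gaussQ y = (Real.sqrt (2 * Real.pi))⁻¹ *
      ((∫ t in Set.Ioi (0:ℝ), Real.exp (-(t ^ 2 / 2)))
        - ∫ t in (0:ℝ)..y, Real.exp (-(t ^ 2 / 2))) := by
    intro y
    unfold gaussQ
    congr 1
    have h1 := intervalIntegral.integral_Iic_sub_Iic (f := fun t : ℝ => Real.exp (-(t ^ 2 / 2)))
      (μ := MeasureTheory.volume) (a := 0) (b := y) hint.integrableOn hint.integrableOn
    have h2 := intervalIntegral.integral_Iic_add_Ioi (f := fun t : ℝ => Real.exp (-(t ^ 2 / 2)))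
      (μ := MeasureTheory.volume) (b := y) hint.integrableOn hint.integrableOn
    have h3 := intervalIntegral.integral_Iic_add_Ioi (f := fun t : ℝ => Real.exp (-(t ^ 2 / 2)))
      (μ := MeasureTheory.volume) (b := 0) hint.integrableOn hint.integrableOn
    linarith
  have hd : HasDerivAt (fun u : ℝ => ∫ t in (0:ℝ)..u, Real.exp (-(t ^ 2 / 2)))
      (Real.exp (-(x ^ 2 / 2))) x :=
    intervalIntegral.integral_hasDerivAt_right (hf.intervalIntegrable _ _)
      (hf.stronglyMeasurableAtFilter _ _) hf.continuousAt
  have := ((hasDerivAt_const x (∫ t in Set.Ioi (0:ℝ), Real.exp (-(t ^ 2 / 2)))).sub hd).const_mul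
    (Real.sqrt (2 * Real.pi))⁻¹
  have h2 : HasDerivAt gaussQ ((Real.sqrt (2 * Real.pi))⁻¹ * (0 - Real.exp (-(x ^ 2 / 2)))) x := by
    refine this.congr_of_eventuallyEq ?_
    filter_upwards with y using (key y)
  convert h2 using 1
  ring

lemma aux_sqrt (b c e : ℝ) (hbc : 0 < b * c) (he : 0 < e) (hee : e * e = b / c) :
    Real.sign c * c * e = Real.sqrt (b * c) ∧
    Real.sign c * b * e⁻¹ = Real.sqrt (b * c) := by
  have hc : c ≠ 0 := by rintro rfl; simp at hbc
  have hb : b ≠ 0 := by rintro rfl; simp at hbc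
  rcases hc.lt_or_gt with hcneg | hcpos
  · have hbneg : b < 0 := by nlinarith
    rw [Real.sign_of_neg hcneg]
    constructor
    · have h2 : ((-1) * c * e) ^ 2 = b * c := by
        rw [mul_pow, mul_pow, sq e, hee]; field_simp
      rw [← h2, Real.sqrt_sq (by nlinarith)]
    · have h2 : ((-1) * b * e⁻¹) ^ 2 = b * c := by
        have he2 : (e⁻¹) ^ 2 = c / b := by
          rw [sq, ← mul_inv, hee]; field_simp
        rw [mul_pow, mul_pow, he2]; field_simp
      have hepos : 0 < e⁻¹ := inv_pos.mpr he
      rw [← h2, Real.sqrt_sq (by nlinarith)]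
  · have hbpos : 0 < b := by nlinarith
    rw [Real.sign_of_pos hcpos]
    constructor
    · have h2 : (1 * c * e) ^ 2 = b * c := by
        rw [mul_pow, mul_pow, sq e, hee]; field_simp
      rw [← h2, Real.sqrt_sq (by positivity)]
    · have h2 : (1 * b * e⁻¹) ^ 2 = b * c := by
        have he2 : (e⁻¹) ^ 2 = c / b := by
          rw [sq, ← mul_inv, hee]; field_simp
        rw [mul_pow, mul_pow, he2]; field_simp
      rw [← h2, Real.sqrt_sq (by positivity)]

/-- Team setup (Theorem 1): with identical costs and priors the common Bayes risk
is strictly decreasing in the normalized distance `d`, so the unique minimizer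
over `(0, d_max]` is `d_max`. -/
theorem stmt_6 (π0 π1 C00 C01 C10 C11 τ ζ : ℝ)
    (hπ0 : 0 < π0) (hπ1 : 0 < π1)
    (hC : (C10 - C00) * (C01 - C11) > 0)
    (hζ : ζ = Real.sign (C01 - C11))
    (hτ : τ = π0 * (C10 - C00) / (π1 * (C01 - C11)))
    (r : ℝ → ℝ)
    (hr : r = fun d : ℝ => π0 * C00 + π1 * C11
        + π0 * (C10 - C00) * gaussQ (ζ * (Real.log τ / d + d / 2))
        + π1 * (C01 - C11) * gaussQ (ζ * (-Real.log τ / d + d / 2))) :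
    (∀ d : ℝ, 0 < d →
      HasDerivAt r
        (-(Real.sqrt (2 * Real.pi))⁻¹
          * Real.exp (-(Real.log τ) ^ 2 / (2 * d ^ 2)) * Real.exp (-d ^ 2 / 8)
          * Real.sqrt (π0 * π1 * (C10 - C00) * (C01 - C11))) d ∧
      -(Real.sqrt (2 * Real.pi))⁻¹
          * Real.exp (-(Real.log τ) ^ 2 / (2 * d ^ 2)) * Real.exp (-d ^ 2 / 8)
          * Real.sqrt (π0 * π1 * (C10 - C00) * (C01 - C11)) < 0) ∧
    StrictAntiOn r (Set.Ioi (0 : ℝ)) ∧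
    (∀ dmax : ℝ, 0 < dmax → ∀ d ∈ Set.Ioc (0 : ℝ) dmax,
      r dmax ≤ r d ∧ (d ≠ dmax → r dmax < r d)) := by
  set L := Real.log τ with hL
  set B := π0 * (C10 - C00) with hB
  set Cc := π1 * (C01 - C11) with hCc
  have hBC : 0 < B * Cc := by
    have : B * Cc = (π0 * π1) * ((C10 - C00) * (C01 - C11)) := by ring
    rw [this]; exact mul_pos (mul_pos hπ0 hπ1) hC
  have hCcne : Cc ≠ 0 := by rintro h; rw [h] at hBC; simp at hBC
  have hC01 : C01 - C11 ≠ 0 := by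
    rintro h; apply hCcne; rw [hCc, h, mul_zero]
  have hτpos : 0 < τ := by
    rw [hτ]; rcases hCcne.lt_or_gt with h | h
    · exact div_pos_of_neg_of_neg (by nlinarith) h
    · exact div_pos (by nlinarith) h
  have hzsq : ζ ^ 2 = 1 := by
    rcases hC01.lt_or_gt with h | h
    · rw [hζ, Real.sign_of_neg h]; norm_num
    · rw [hζ, Real.sign_of_pos h]; norm_num
  -- exponential facts
  have heL : Real.exp (L / 2) * Real.exp (L / 2) = B / Cc := by
    rw [← Real.exp_add, add_halves, hL, Real.exp_log hτpos, hτ]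
  have hsgnC : Real.sign Cc = ζ := by
    rcases hC01.lt_or_gt with h | h
    · rw [hζ, Real.sign_of_neg h, Real.sign_of_neg (by nlinarith : Cc < 0)]
    · rw [hζ, Real.sign_of_pos h, Real.sign_of_pos (by nlinarith : 0 < Cc)]
  obtain ⟨clC, clB⟩ := aux_sqrt B Cc (Real.exp (L / 2)) hBC (Real.exp_pos _) heL
  rw [hsgnC] at clC clB
  have hSeq : π0 * π1 * (C10 - C00) * (C01 - C11) = B * Cc := by rw [hB, hCc]; ring
  have hexpneg : Real.exp (-(L / 2)) = (Real.exp (L / 2))⁻¹ := Real.exp_neg _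
  -- the derivative claim
  have hderiv : ∀ d : ℝ, 0 < d →
      HasDerivAt r
        (-(Real.sqrt (2 * Real.pi))⁻¹
          * Real.exp (-L ^ 2 / (2 * d ^ 2)) * Real.exp (-d ^ 2 / 8)
          * Real.sqrt (π0 * π1 * (C10 - C00) * (C01 - C11))) d := by
    intro d hd
    have hdne : d ≠ 0 := hd.ne'
    have hg1 : HasDerivAt (fun d : ℝ => ζ * (L / d + d / 2))
        (ζ * (L * (-(d ^ 2)⁻¹) + 1 / 2)) d := by
      have := (((hasDerivAt_inv hdne).const_mul L).add ((hasDerivAt_id d).div_const 2)).const_mul ζ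
      exact this.congr_deriv (by ring)
    have hg2 : HasDerivAt (fun d : ℝ => ζ * (-L / d + d / 2))
        (ζ * (L * (d ^ 2)⁻¹ + 1 / 2)) d := by
      have := (((hasDerivAt_inv hdne).const_mul (-L)).add
        ((hasDerivAt_id d).div_const 2)).const_mul ζ
      exact this.congr_deriv (by ring)
    have hQ1 := (hasDerivAt_gaussQ (ζ * (L / d + d / 2))).comp d hg1
    have hQ2 := (hasDerivAt_gaussQ (ζ * (-L / d + d / 2))).comp d hg2
    have hmain : HasDerivAt r
        (B * (-((Real.sqrt (2 * Real.pi))⁻¹ * Real.exp (-((ζ * (L / d + d / 2)) ^ 2 / 2)))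
            * (ζ * (L * (-(d ^ 2)⁻¹) + 1 / 2)))
          + Cc * (-((Real.sqrt (2 * Real.pi))⁻¹ * Real.exp (-((ζ * (-L / d + d / 2)) ^ 2 / 2)))
            * (ζ * (L * (d ^ 2)⁻¹ + 1 / 2)))) d := by
      rw [hr]
      have h0 : HasDerivAt (fun _ : ℝ => π0 * C00 + π1 * C11) 0 d := hasDerivAt_const _ _
      have := (h0.add (hQ1.const_mul B)).add (hQ2.const_mul Cc)
      exact this.congr_deriv (by ring)
    have he1 : Real.exp (-((ζ * (L / d + d / 2)) ^ 2 / 2))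
        = Real.exp (-L ^ 2 / (2 * d ^ 2)) * Real.exp (-d ^ 2 / 8) * Real.exp (-(L / 2)) := by
      rw [← Real.exp_add, ← Real.exp_add]
      congr 1
      rw [mul_pow, hzsq]
      field_simp
      ring
    have he2 : Real.exp (-((ζ * (-L / d + d / 2)) ^ 2 / 2))
        = Real.exp (-L ^ 2 / (2 * d ^ 2)) * Real.exp (-d ^ 2 / 8) * Real.exp (L / 2) := by
      rw [← Real.exp_add, ← Real.exp_add]
      congr 1
      rw [mul_pow, hzsq]
      field_simp
      ring
    convert hmain using 1
    rw [he1, he2, hSeq, hexpneg]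
    set k := (Real.sqrt (2 * Real.pi))⁻¹
    set E1 := Real.exp (-L ^ 2 / (2 * d ^ 2))
    set E2 := Real.exp (-d ^ 2 / 8)
    set e := Real.exp (L / 2)
    linear_combination ((k * E1 * E2) * (L * (-(d ^ 2)⁻¹) + 1 / 2)) * clB
      + ((k * E1 * E2) * (L * (d ^ 2)⁻¹ + 1 / 2)) * clC
  have hneg : ∀ d : ℝ, 0 < d →
      -(Real.sqrt (2 * Real.pi))⁻¹
          * Real.exp (-L ^ 2 / (2 * d ^ 2)) * Real.exp (-d ^ 2 / 8)
          * Real.sqrt (π0 * π1 * (C10 - C00) * (C01 - C11)) < 0 := by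
    intro d hd
    have h1 : 0 < Real.sqrt (π0 * π1 * (C10 - C00) * (C01 - C11)) := by
      rw [hSeq]; exact Real.sqrt_pos.mpr hBC
    have h2 : 0 < (Real.sqrt (2 * Real.pi))⁻¹ := by
      have := Real.pi_pos; positivity
    nlinarith [Real.exp_pos (-L ^ 2 / (2 * d ^ 2)), Real.exp_pos (-d ^ 2 / 8),
      mul_pos (mul_pos (mul_pos h2 (Real.exp_pos (-L ^ 2 / (2 * d ^ 2))))
        (Real.exp_pos (-d ^ 2 / 8))) h1]
  have hanti : StrictAntiOn r (Set.Ioi (0 : ℝ)) := by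
    apply strictAntiOn_of_deriv_neg (convex_Ioi 0)
    · intro x hx
      exact (hderiv x hx).differentiableAt.continuousAt.continuousWithinAt
    · intro x hx
      rw [interior_Ioi] at hx
      rw [(hderiv x hx).deriv]
      exact hneg x hx
  refine ⟨fun d hd => ⟨hderiv d hd, hneg d hd⟩, hanti, ?_⟩
  intro dmax hmax d hd
  rcases eq_or_lt_of_le hd.2 with h | h
  · subst h; exact ⟨le_refl _, fun h => absurd rfl h⟩
  · exact ⟨(hanti hd.1 hmax h).le, fun _ => hanti hd.1 hmax h⟩
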